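/- arXiv:1310.1969 — 2 statements merged into one kernel-verified Lean document; each statement's English description precedes it below -/
import Mathlib

section
/- For nonincreasing nonnegative λ and any two vectors b, w ∈ ℝ^p, one has ⟨w, b⟩ ≤ Σᵢ |w|₍ᵢ₎ |b|₍ᵢ₎, i.e., the inner product is maximized when the absolute values are similarly ordered (a rearrangement inequality), and consequently ⟨w, b⟩ ≤ J_λ(b) whenever Σ_{j≤i} |w|₍ⱼ₎ ≤ Σ_{j≤i} λⱼ for all i. -/
/-- The `i`-th largest absolute value among the coordinates of `b`. -/
noncomputable def sortedAbs {p : ℕ} (b : Fin p → ℝ) (i : Fin p) : ℝ :=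
  |b (Tuple.sort (fun j => |b j|) i.rev)|

/-- The sorted ℓ₁ norm `J_λ(b) = ∑ᵢ λᵢ |b|₍ᵢ₎`. -/
noncomputable def sortedL1 {p : ℕ} (lam b : Fin p → ℝ) : ℝ :=
  ∑ i, lam i * sortedAbs b i

lemma my_antitone_sortedAbs {p : ℕ} (b : Fin p → ℝ) : Antitone (sortedAbs b) := by
  have h := Tuple.monotone_sort (fun j : Fin p => |b j|)
  intro i j hij
  exact h (Fin.rev_le_rev.mpr hij)

lemma my_sortedAbs_nonneg {p : ℕ} (b : Fin p → ℝ) (i : Fin p) : 0 ≤ sortedAbs b i :=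
  abs_nonneg _

lemma my_fin_sum_Iic {p : ℕ} (f : Fin p → ℝ) (g : ℕ → ℝ)
    (hg : ∀ (k : ℕ) (h : k < p), g k = f ⟨k, h⟩) (i : Fin p) :
    ∑ j ∈ Finset.Iic i, f j = ∑ k ∈ Finset.range (i.val + 1), g k := by
  refine Finset.sum_bij' (fun j _ => (j : ℕ)) (fun k hk => ⟨k, ?_⟩) ?_ ?_ ?_ ?_ ?_
  · exact lt_of_lt_of_le (Finset.mem_range.mp hk) (Nat.succ_le_of_lt i.isLt)
  · intro j hj
    simp only [Finset.mem_range]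
    exact Nat.lt_succ_of_le (show j ≤ i from Finset.mem_Iic.mp hj)
  · intro k hk
    simp only [Finset.mem_Iic]
    exact Fin.mk_le_mk.mpr (Nat.lt_succ_iff.mp (Finset.mem_range.mp hk))
  · intro j _; rfl
  · intro k _; rfl
  · intro j hj
    rw [hg _ j.isLt]

lemma my_key_abel (n : ℕ) (d c : ℕ → ℝ)
    (hc : ∀ i j, i ≤ j → j < n → c j ≤ c i)
    (hc0 : ∀ i, i < n → 0 ≤ c i)
    (hd : ∀ k, k ≤ n → 0 ≤ ∑ i ∈ Finset.range k, d i) :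
    0 ≤ ∑ i ∈ Finset.range n, d i * c i := by
  induction n generalizing c with
  | zero => simp
  | succ n ih =>
    have h1 : 0 ≤ ∑ i ∈ Finset.range n, d i * (c i - c n) := by
      refine ih (fun i => c i - c n) (fun i j hij hj => ?_) (fun i hi => ?_)
        (fun k hk => hd k (hk.trans n.le_succ))
      · have := hc i j hij (hj.trans n.lt_succ_self)
        show c j - c n ≤ c i - c n
        linarith
      · have := hc i n hi.le n.lt_succ_self
        show (0:ℝ) ≤ c i - c n
        linarith
    have h2 : 0 ≤ (∑ i ∈ Finset.range (n+1), d i) * c n :=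
      mul_nonneg (hd _ le_rfl) (hc0 n n.lt_succ_self)
    have h3 : ∑ i ∈ Finset.range (n+1), d i * c i =
        (∑ i ∈ Finset.range n, d i * (c i - c n)) + (∑ i ∈ Finset.range (n+1), d i) * c n := by
      rw [Finset.sum_range_succ, Finset.sum_range_succ (f := d), add_mul, Finset.sum_mul]
      simp only [mul_sub]
      rw [Finset.sum_sub_distrib]
      ring
    linarith

/-- rearrangement inequality for the inner product and the
consequent dual bound for the sorted ℓ₁ norm. -/
theorem inner_le_sorted_and_le_sortedL1 {p : ℕ} (lam : Fin p → ℝ)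
    (hmono : Antitone lam) (hnonneg : ∀ i, 0 ≤ lam i) (b w : Fin p → ℝ) :
    (∑ i, w i * b i ≤ ∑ i, sortedAbs w i * sortedAbs b i) ∧
    ((∀ i : Fin p, ∑ j ∈ Finset.Iic i, sortedAbs w j ≤ ∑ j ∈ Finset.Iic i, lam j) →
      ∑ i, w i * b i ≤ sortedL1 lam b) := by
  have part1 : ∑ i, w i * b i ≤ ∑ i, sortedAbs w i * sortedAbs b i := by
    have h1 : ∑ i, w i * b i ≤ ∑ i, |w i| * |b i| :=
      Finset.sum_le_sum fun i _ => by
        calc w i * b i ≤ |w i * b i| := le_abs_self _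
        _ = |w i| * |b i| := abs_mul _ _
    set τw := Tuple.sort (fun j : Fin p => |w j|) with hτw
    set τb := Tuple.sort (fun j : Fin p => |b j|) with hτb
    set e : Equiv.Perm (Fin p) := Fin.revPerm.trans τw with he
    set σ : Equiv.Perm (Fin p) :=
      Fin.revPerm.trans (τw.trans ((τb⁻¹ : Equiv.Perm (Fin p)).trans Fin.revPerm)) with hσ
    have h2 : ∑ i, |w i| * |b i| = ∑ i, sortedAbs w i * sortedAbs b (σ i) := by
      rw [← Equiv.sum_comp e (fun i => |w i| * |b i|)]
      refine Finset.sum_congr rfl fun i _ => ?_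
      have hw : |w (e i)| = sortedAbs w i := by
        simp [he, sortedAbs, hτw, Equiv.trans_apply]
      have hb : |b (e i)| = sortedAbs b (σ i) := by
        simp [he, hσ, sortedAbs, hτb, Equiv.trans_apply, Fin.rev_rev]
      rw [hw, hb]
    have h3 : ∑ i, sortedAbs w i * sortedAbs b (σ i) ≤ ∑ i, sortedAbs w i * sortedAbs b i :=
      Monovary.sum_mul_comp_perm_le_sum_mul
        ((my_antitone_sortedAbs w).monovary (my_antitone_sortedAbs b))
    linarith
  refine ⟨part1, fun hS => ?_⟩
  set a : ℕ → ℝ := fun k => if h : k < p then sortedAbs w ⟨k, h⟩ else 0 with ha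
  set l : ℕ → ℝ := fun k => if h : k < p then lam ⟨k, h⟩ else 0 with hl
  set c : ℕ → ℝ := fun k => if h : k < p then sortedAbs b ⟨k, h⟩ else 0 with hc
  have hcmono : ∀ i j, i ≤ j → j < p → c j ≤ c i := by
    intro i j hij hj
    have hi : i < p := lt_of_le_of_lt hij hj
    simp only [hc, dif_pos hi, dif_pos hj]
    exact my_antitone_sortedAbs b (Fin.mk_le_mk.mpr hij)
  have hc0 : ∀ i, i < p → 0 ≤ c i := by
    intro i hi
    simp only [hc, dif_pos hi]
    exact my_sortedAbs_nonneg b _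
  have hd : ∀ k, k ≤ p → 0 ≤ ∑ i ∈ Finset.range k, (l i - a i) := by
    intro k hk
    rw [Finset.sum_sub_distrib, sub_nonneg]
    match k, hk with
    | 0, _ => simp
    | (m+1), hk =>
      have hm : m < p := hk
      have := hS ⟨m, hm⟩
      rwa [my_fin_sum_Iic (sortedAbs w) a (fun k h => by simp [ha, dif_pos h]) ⟨m, hm⟩,
        my_fin_sum_Iic lam l (fun k h => by simp [hl, dif_pos h]) ⟨m, hm⟩] at this
  have hkey := my_key_abel p (fun i => l i - a i) c hcmono hc0 hd
  have e1 : ∑ i, sortedAbs w i * sortedAbs b i = ∑ k ∈ Finset.range p, a k * c k := by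
    rw [← Fin.sum_univ_eq_sum_range (fun k => a k * c k) p]
    exact Finset.sum_congr rfl fun i _ => by simp [ha, hc, dif_pos i.isLt]
  have e2 : sortedL1 lam b = ∑ k ∈ Finset.range p, l k * c k := by
    rw [sortedL1, ← Fin.sum_univ_eq_sum_range (fun k => l k * c k) p]
    exact Finset.sum_congr rfl fun i _ => by simp [hl, hc, dif_pos i.isLt]
  have e3 : ∑ k ∈ Finset.range p, (l k - a k) * c k =
      (∑ k ∈ Finset.range p, l k * c k) - ∑ k ∈ Finset.range p, a k * c k := by
    simp only [sub_mul]
    rw [Finset.sum_sub_distrib]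
  rw [e3] at hkey
  linarith [part1, e1 ▸ e2 ▸ hkey, e1, e2]
end

section
/- Let ỹ ∈ ℝ^p and λ₁ ≥ … ≥ λ_p > 0. Any minimizer β̂ of b ↦ ½‖ỹ − b‖₂² + Σᵢ λᵢ |b|₍ᵢ₎ satisfies: each β̂ᵢ has the same sign as ỹᵢ (or is zero), and |β̂ᵢ| ≥ |β̂ⱼ| whenever |ỹᵢ| ≥ |ỹⱼ|; i.e., the prox of the sorted ℓ₁ norm preserves signs and the ordering of magnitudes. -/
lemma sortedAbs_eq {p : ℕ} (b : Fin p → ℝ) (i : Fin p) :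
    sortedAbs b i = ((fun j => |b j|) ∘ Tuple.sort (fun j => |b j|)) i.rev := rfl

/-- invariance under permutations and sign changes -/
lemma sortedAbs_perm {p : ℕ} {b c : Fin p → ℝ} (σ : Equiv.Perm (Fin p))
    (h : (fun k => |b k|) = (fun k => |c k|) ∘ σ) : sortedAbs b = sortedAbs c := by
  funext i
  rw [sortedAbs_eq, sortedAbs_eq, h, Tuple.comp_perm_comp_sort_eq_comp_sort]

lemma sortedL1_perm {p : ℕ} (lam : Fin p → ℝ) {b c : Fin p → ℝ} (σ : Equiv.Perm (Fin p))
    (h : (fun k => |b k|) = (fun k => |c k|) ∘ σ) : sortedL1 lam b = sortedL1 lam c := by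
  unfold sortedL1; rw [sortedAbs_perm σ h]

lemma sortedAbs_smul {p : ℕ} {c : ℝ} (hc : 0 ≤ c) (b : Fin p → ℝ) (i : Fin p) :
    sortedAbs (fun k => c * b k) i = c * sortedAbs b i := by
  have habs : (fun k => |c * b k|) = fun k => c * |b k| := by
    funext k; rw [abs_mul, abs_of_nonneg hc]
  have hmono : Monotone ((fun k => c * |b k|) ∘ Tuple.sort (fun k => |b k|)) := by
    intro a a' haa
    exact mul_le_mul_of_nonneg_left (Tuple.monotone_sort (fun k => |b k|) haa) hc
  have key : (fun k => c * |b k|) ∘ Tuple.sort (fun k => |b k|)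
      = (fun k => c * |b k|) ∘ Tuple.sort (fun k => c * |b k|) :=
    (Tuple.comp_sort_eq_comp_iff_monotone).mpr hmono
  rw [sortedAbs_eq, habs, ← key]
  simp [sortedAbs_eq]

lemma sortedL1_smul {p : ℕ} (lam : Fin p → ℝ) {c : ℝ} (hc : 0 ≤ c) (b : Fin p → ℝ) :
    sortedL1 lam (fun k => c * b k) = c * sortedL1 lam b := by
  unfold sortedL1
  rw [Finset.mul_sum]
  exact Finset.sum_congr rfl fun i _ => by rw [sortedAbs_smul hc]; ring

/-- rearrangement upper bound -/
lemma sum_perm_le_sortedL1 {p : ℕ} {lam : Fin p → ℝ} (hmono : Antitone lam)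
    (b : Fin p → ℝ) (π : Equiv.Perm (Fin p)) :
    ∑ i, lam i * |b (π i)| ≤ sortedL1 lam b := by
  set g : Fin p → ℝ := fun k => |b k| with hg
  set s : Equiv.Perm (Fin p) := Tuple.sort g with hs
  set L : Fin p → ℝ := fun i => lam i.rev with hL
  set G : Fin p → ℝ := fun i => g (s i) with hG
  have hLmono : Monotone L := fun a a' h => hmono (Fin.rev_le_rev.mpr h)
  have hGmono : Monotone G := Tuple.monotone_sort g
  have hmv : Monovary L G := hLmono.monovary hGmono
  set σ : Equiv.Perm (Fin p) := (Fin.revPerm.trans π).trans s.symm with hσ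
  have key : ∑ i, L i • G (σ i) ≤ ∑ i, L i • G i :=
    hmv.sum_smul_comp_perm_le_sum_smul (σ := σ)
  have e1 : ∑ i, lam i * |b (π i)| = ∑ i, L i • G (σ i) := by
    rw [← Equiv.sum_comp Fin.revPerm (fun i => L i • G (σ i))]
    refine Finset.sum_congr rfl fun i _ => ?_
    simp [hL, hG, hσ, hg, Fin.rev_rev, smul_eq_mul]
  have e2 : sortedL1 lam b = ∑ i, L i • G i := by
    unfold sortedL1
    rw [← Equiv.sum_comp Fin.revPerm (fun i => L i • G i)]
    refine Finset.sum_congr rfl fun i _ => ?_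
    simp [hL, hG, sortedAbs_eq, Fin.rev_rev, smul_eq_mul, hg, hs]
  rw [e1, e2]; exact key

lemma sortedL1_eq_sum_perm {p : ℕ} (lam b : Fin p → ℝ) :
    sortedL1 lam b
      = ∑ i, lam i * |b ((Fin.revPerm.trans (Tuple.sort (fun k => |b k|))) i)| := by
  unfold sortedL1
  exact Finset.sum_congr rfl fun i _ => by simp [sortedAbs_eq]

lemma sortedL1_add_le {p : ℕ} {lam : Fin p → ℝ} (hmono : Antitone lam)
    (hpos : ∀ i, 0 ≤ lam i) (x y : Fin p → ℝ) :
    sortedL1 lam (fun k => x k + y k) ≤ sortedL1 lam x + sortedL1 lam y := by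
  set z : Fin p → ℝ := fun k => x k + y k with hz
  set τ : Equiv.Perm (Fin p) := Fin.revPerm.trans (Tuple.sort (fun k => |z k|)) with hτ
  have h1 : sortedL1 lam z = ∑ i, lam i * |z (τ i)| := sortedL1_eq_sum_perm lam z
  have h2 : ∑ i, lam i * |z (τ i)|
      ≤ ∑ i, lam i * |x (τ i)| + ∑ i, lam i * |y (τ i)| := by
    rw [← Finset.sum_add_distrib]
    refine Finset.sum_le_sum fun i _ => ?_
    rw [← mul_add]
    exact mul_le_mul_of_nonneg_left (abs_add_le _ _) (hpos i)
  calc sortedL1 lam z = ∑ i, lam i * |z (τ i)| := h1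
    _ ≤ ∑ i, lam i * |x (τ i)| + ∑ i, lam i * |y (τ i)| := h2
    _ ≤ sortedL1 lam x + sortedL1 lam y :=
        add_le_add (sum_perm_le_sortedL1 hmono x τ) (sum_perm_le_sortedL1 hmono y τ)

/-- strict minimality -/
lemma slope_strict_min {p : ℕ} (lam : Fin p → ℝ) (hmono : Antitone lam)
    (hpos : ∀ i, 0 < lam i) (ytil βhat : Fin p → ℝ)
    (hmin : ∀ b : Fin p → ℝ,
      (1 / 2) * ∑ i, (ytil i - βhat i) ^ 2 + sortedL1 lam βhat ≤
      (1 / 2) * ∑ i, (ytil i - b i) ^ 2 + sortedL1 lam b)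
    (b : Fin p → ℝ)
    (hb : (1 / 2) * ∑ i, (ytil i - b i) ^ 2 + sortedL1 lam b ≤
      (1 / 2) * ∑ i, (ytil i - βhat i) ^ 2 + sortedL1 lam βhat) :
    b = βhat := by
  by_contra hne
  set m : Fin p → ℝ := fun i => (b i + βhat i) / 2 with hm
  have hJ : sortedL1 lam m ≤ (sortedL1 lam b + sortedL1 lam βhat) / 2 := by
    have hsplit : m = fun k => (fun i => (1/2 : ℝ) * b i) k + (fun i => (1/2 : ℝ) * βhat i) k := by
      funext k; simp [hm]; ring
    rw [hsplit]
    calc sortedL1 lam _ ≤ sortedL1 lam (fun i => (1/2 : ℝ) * b i)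
          + sortedL1 lam (fun i => (1/2 : ℝ) * βhat i) :=
        sortedL1_add_le hmono (fun i => (hpos i).le) _ _
      _ = (sortedL1 lam b + sortedL1 lam βhat) / 2 := by
        rw [sortedL1_smul lam (by norm_num : (0:ℝ) ≤ 1/2),
          sortedL1_smul lam (by norm_num : (0:ℝ) ≤ 1/2)]; ring
  have hD : 0 < ∑ i, (b i - βhat i) ^ 2 := by
    obtain ⟨i, hi⟩ := Function.ne_iff.mp hne
    refine Finset.sum_pos' (fun k _ => sq_nonneg _) ⟨i, Finset.mem_univ i, ?_⟩
    have hne0 : b i - βhat i ≠ 0 := sub_ne_zero.mpr hi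
    calc (0:ℝ) < |b i - βhat i| ^ 2 := pow_pos (abs_pos.mpr hne0) 2
      _ = (b i - βhat i) ^ 2 := sq_abs _
  have hQ : ∑ i, (ytil i - m i) ^ 2
      = (∑ i, (ytil i - b i) ^ 2 + ∑ i, (ytil i - βhat i) ^ 2) / 2
        - (∑ i, (b i - βhat i) ^ 2) / 4 := by
    have e : ∀ i, (ytil i - m i) ^ 2
        = ((ytil i - b i) ^ 2 + (ytil i - βhat i) ^ 2) / 2 - (b i - βhat i) ^ 2 / 4 :=
      fun i => by simp only [hm]; ring
    simp_rw [e]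
    rw [Finset.sum_sub_distrib, ← Finset.sum_div, ← Finset.sum_div, Finset.sum_add_distrib]
  have hmm := hmin m
  rw [hQ] at hmm
  linarith [hmm, hJ, hb, hD]

/-- the prox of the sorted ℓ₁ norm preserves signs and the
ordering of magnitudes. -/
theorem slope_prox_sign_and_order {p : ℕ} (lam : Fin p → ℝ)
    (hmono : Antitone lam) (hpos : ∀ i, 0 < lam i)
    (ytil : Fin p → ℝ) (βhat : Fin p → ℝ)
    (hmin : ∀ b : Fin p → ℝ,
      (1 / 2) * ∑ i, (ytil i - βhat i) ^ 2 + sortedL1 lam βhat ≤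
      (1 / 2) * ∑ i, (ytil i - b i) ^ 2 + sortedL1 lam b) :
    (∀ i, 0 ≤ βhat i * ytil i) ∧
    (∀ i j : Fin p, |ytil j| ≤ |ytil i| → |βhat j| ≤ |βhat i|) := by
  have hsign : ∀ i, 0 ≤ βhat i * ytil i := by
    intro i
    by_contra h
    push_neg at h
    set b : Fin p → ℝ := Function.update βhat i (-βhat i) with hbdef
    have habs : (fun k => |b k|) = (fun k => |βhat k|) ∘ (Equiv.refl (Fin p)) := by
      funext k
      by_cases hk : k = i
      · subst hk; simp [hbdef]
      · simp [hbdef, Function.update_of_ne hk]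
    have hJ : sortedL1 lam b = sortedL1 lam βhat := sortedL1_perm lam _ habs
    have hupd : (fun k => (ytil k - b k) ^ 2)
        = Function.update (fun k => (ytil k - βhat k) ^ 2) i ((ytil i + βhat i) ^ 2) := by
      funext k
      by_cases hk : k = i
      · subst hk; simp [hbdef]
      · simp [hbdef, Function.update_of_ne hk]
    have hQ : ∑ k, (ytil k - b k) ^ 2
        = (ytil i + βhat i) ^ 2 + ∑ k ∈ Finset.univ.erase i, (ytil k - βhat k) ^ 2 := by
      rw [show ∑ k, (ytil k - b k) ^ 2 = ∑ k, Function.update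
        (fun k => (ytil k - βhat k) ^ 2) i ((ytil i + βhat i) ^ 2) k from by rw [← hupd]]
      rw [← Finset.add_sum_erase _ _ (Finset.mem_univ i), Function.update_self]
      congr 1
      exact Finset.sum_congr rfl fun k hk =>
        Function.update_of_ne (Finset.ne_of_mem_erase hk) _ _
    have hQβ : ∑ k, (ytil k - βhat k) ^ 2
        = (ytil i - βhat i) ^ 2 + ∑ k ∈ Finset.univ.erase i, (ytil k - βhat k) ^ 2 :=
      (Finset.add_sum_erase _ _ (Finset.mem_univ i)).symm
    have := hmin b
    rw [hJ, hQ, hQβ] at this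
    nlinarith [this, h]
  refine ⟨hsign, fun i j hy => ?_⟩
  by_contra hlt
  push_neg at hlt
  have hij : i ≠ j := fun h => by rw [h] at hlt; exact lt_irrefl _ hlt
  set s : Fin p → ℝ := fun k => if 0 ≤ ytil k then 1 else -1 with hsdef
  have hsabs : ∀ k, |s k| = 1 := by
    intro k; simp only [hsdef]; split <;> norm_num
  have hsy : ∀ k, s k * ytil k = |ytil k| := by
    intro k; simp only [hsdef]; split
    · rw [one_mul, abs_of_nonneg ‹_›]
    · rw [neg_one_mul, abs_of_neg (lt_of_not_ge ‹_›)]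
  set b : Fin p → ℝ :=
    Function.update (Function.update βhat i (s i * |βhat j|)) j (s j * |βhat i|) with hbdef
  have hbi : b i = s i * |βhat j| := by
    rw [hbdef, Function.update_of_ne hij, Function.update_self]
  have hbj : b j = s j * |βhat i| := by rw [hbdef, Function.update_self]
  have hbk : ∀ k, k ≠ i → k ≠ j → b k = βhat k := by
    intro k hki hkj
    rw [hbdef, Function.update_of_ne hkj, Function.update_of_ne hki]
  have habs : (fun k => |b k|) = (fun k => |βhat k|) ∘ (Equiv.swap i j) := by
    funext k
    by_cases hki : k = i
    · subst hki; simp [hbi, abs_mul, hsabs, Equiv.swap_apply_left]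
    · by_cases hkj : k = j
      · subst hkj; simp [hbj, abs_mul, hsabs, Equiv.swap_apply_right]
      · simp [hbk k hki hkj, Equiv.swap_apply_of_ne_of_ne hki hkj]
  have hJ : sortedL1 lam b = sortedL1 lam βhat := sortedL1_perm lam _ habs
  -- quadratic comparison
  have hprodi : ytil i * βhat i = |ytil i| * |βhat i| := by
    rw [← abs_mul, abs_of_nonneg (by rw [mul_comm]; exact hsign i)]
  have hprodj : ytil j * βhat j = |ytil j| * |βhat j| := by
    rw [← abs_mul, abs_of_nonneg (by rw [mul_comm]; exact hsign j)]
  have hs2 : ∀ k, s k ^ 2 = 1 := by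
    intro k; rw [← sq_abs, hsabs]; norm_num
  have hupd : (fun k => (ytil k - b k) ^ 2)
      = Function.update (Function.update (fun k => (ytil k - βhat k) ^ 2) i
          ((ytil i - s i * |βhat j|) ^ 2)) j ((ytil j - s j * |βhat i|) ^ 2) := by
    funext k
    by_cases hkj : k = j
    · subst hkj; simp [hbj]
    · by_cases hki : k = i
      · subst hki; simp [Function.update_of_ne hkj, hbi]
      · simp [Function.update_of_ne hkj, Function.update_of_ne hki, hbk k hki hkj]
  have hQ : ∑ k, (ytil k - b k) ^ 2
      = (ytil j - s j * |βhat i|) ^ 2 + (ytil i - s i * |βhat j|) ^ 2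
        + ∑ k ∈ (Finset.univ.erase j).erase i, (ytil k - βhat k) ^ 2 := by
    rw [show ∑ k, (ytil k - b k) ^ 2 = ∑ k, (Function.update (Function.update
        (fun k => (ytil k - βhat k) ^ 2) i ((ytil i - s i * |βhat j|) ^ 2)) j
        ((ytil j - s j * |βhat i|) ^ 2)) k from by rw [← hupd]]
    rw [← Finset.add_sum_erase _ _ (Finset.mem_univ j), Function.update_self]
    have hi' : i ∈ Finset.univ.erase j := Finset.mem_erase.mpr ⟨hij, Finset.mem_univ i⟩
    rw [← Finset.add_sum_erase _ _ hi', add_assoc]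
    congr 1
    rw [Function.update_of_ne hij, Function.update_self]
    congr 1
    refine Finset.sum_congr rfl fun k hk => ?_
    have hki : k ≠ i := Finset.ne_of_mem_erase hk
    have hkj : k ≠ j := Finset.ne_of_mem_erase (Finset.mem_of_mem_erase hk)
    rw [Function.update_of_ne hkj, Function.update_of_ne hki]
  have hQβ : ∑ k, (ytil k - βhat k) ^ 2
      = (ytil j - βhat j) ^ 2 + (ytil i - βhat i) ^ 2
        + ∑ k ∈ (Finset.univ.erase j).erase i, (ytil k - βhat k) ^ 2 := by
    rw [← Finset.add_sum_erase _ (fun k => (ytil k - βhat k) ^ 2) (Finset.mem_univ j)]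
    have hi' : i ∈ Finset.univ.erase j := Finset.mem_erase.mpr ⟨hij, Finset.mem_univ i⟩
    rw [← Finset.add_sum_erase _ _ hi', add_assoc]
  have hQle : ∑ k, (ytil k - b k) ^ 2 ≤ ∑ k, (ytil k - βhat k) ^ 2 := by
    rw [hQ, hQβ]
    have hyi : s i * |βhat j| * ytil i = |ytil i| * |βhat j| := by
      rw [mul_comm (s i * |βhat j|) (ytil i), ← mul_assoc, mul_comm (ytil i) (s i), hsy]
    have hyj : s j * |βhat i| * ytil j = |ytil j| * |βhat i| := by
      rw [mul_comm (s j * |βhat i|) (ytil j), ← mul_assoc, mul_comm (ytil j) (s j), hsy]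
    have hsqj : (s i * |βhat j|) ^ 2 = βhat j ^ 2 := by
      rw [mul_pow, hs2, one_mul, sq_abs]
    have hsqi : (s j * |βhat i|) ^ 2 = βhat i ^ 2 := by
      rw [mul_pow, hs2, one_mul, sq_abs]
    have habsi : |ytil i| * |βhat i| = ytil i * βhat i := hprodi.symm
    have habsj : |ytil j| * |βhat j| = ytil j * βhat j := hprodj.symm
    nlinarith [mul_nonneg (sub_nonneg.mpr hy) (sub_nonneg.mpr hlt.le)]
  have hble : (1 / 2) * ∑ k, (ytil k - b k) ^ 2 + sortedL1 lam b ≤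
      (1 / 2) * ∑ k, (ytil k - βhat k) ^ 2 + sortedL1 lam βhat := by
    rw [hJ]; linarith
  have heq : b = βhat := slope_strict_min lam hmono hpos ytil βhat hmin b hble
  have : βhat i = s i * |βhat j| := by rw [← hbi, heq]
  have habsi : |βhat i| = |βhat j| := by
    rw [this, abs_mul, hsabs, one_mul, abs_abs]
  rw [habsi] at hlt
  exact lt_irrefl _ hlt
end
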